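/- arXiv:2205.05004 — 7 statements merged into one kernel-verified Lean document; each statement's English description precedes it below -/
import Mathlib

section
/- Let H be an Ising Hamiltonian on n spins and G^SK its SK graph with total weight W = Σ_{1≤i<j≤n+1} w(i,j). Then min_{x ∈ {−1,+1}^n} H(x) = min_{y ∈ {−1,+1}^{n+1}} H^SK(y) = 2·MC(G^SK) − W, where MC(G^SK) is the minimum cut value of G^SK. -/
open Finset

/-- The Ising Hamiltonian on `n` spins (0-indexed: spins `0,…,n-1`):
`H(x) = −Σ_i h_i x_i − Σ_{i<j} J_{ij} x_i x_j`. -/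
noncomputable def isingH (n : ℕ) (h : ℕ → ℝ) (J : ℕ → ℕ → ℝ) (x : ℕ → ℝ) : ℝ :=
  -(∑ i ∈ range n, h i * x i) -
    ∑ i ∈ range n, ∑ j ∈ range n, if i < j then J i j * x i * x j else 0

/-- Weights of the SK graph on nodes `0,…,n` (node `n` is the extra node capturing the
external fields): `w(i,j) = J_{ij}` for `i < j < n`, `w(i,n) = h_i` for `i < n`,
extended symmetrically, with zero diagonal. -/
noncomputable def skWeight (n : ℕ) (h : ℕ → ℝ) (J : ℕ → ℕ → ℝ) (i j : ℕ) : ℝ :=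
  if i < j then (if j = n then h i else J i j)
  else if j < i then (if i = n then h j else J j i)
  else 0

/-- The SK Hamiltonian `H^SK(y) = −Σ_{i<j} w(i,j) y_i y_j` on the `n+1` nodes. -/
noncomputable def skH (n : ℕ) (h : ℕ → ℝ) (J : ℕ → ℕ → ℝ) (y : ℕ → ℝ) : ℝ :=
  -∑ i ∈ range (n + 1), ∑ j ∈ range (n + 1),
      if i < j then skWeight n h J i j * y i * y j else 0

/-- Total weight `W = Σ_{i<j} w(i,j)` of the SK graph. -/
noncomputable def skTotalWeight (n : ℕ) (h : ℕ → ℝ) (J : ℕ → ℕ → ℝ) : ℝ :=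
  ∑ i ∈ range (n + 1), ∑ j ∈ range (n + 1), if i < j then skWeight n h J i j else 0

/-- Cut capacity `c(S) = Σ_{u ∈ S, v ∈ V \ S} w(u,v)` on the SK graph, for `S ⊆ {0,…,n}`. -/
noncomputable def skCut (n : ℕ) (h : ℕ → ℝ) (J : ℕ → ℕ → ℝ) (S : Finset ℕ) : ℝ :=
  ∑ u ∈ S, ∑ v ∈ range (n + 1) \ S, skWeight n h J u v

/-- Minimum cut value of the SK graph (cuts range over all subsets, including `∅`). -/
noncomputable def skMC (n : ℕ) (h : ℕ → ℝ) (J : ℕ → ℕ → ℝ) : ℝ :=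
  sInf (skCut n h J '' {S : Finset ℕ | S ⊆ range (n + 1)})

lemma skWeight_symm (n : ℕ) (h : ℕ → ℝ) (J : ℕ → ℕ → ℝ) (i j : ℕ) :
    skWeight n h J i j = skWeight n h J j i := by
  unfold skWeight
  rcases lt_trichotomy i j with hij | hij | hij
  · simp [hij, not_lt.mpr hij.le]
  · simp [hij]
  · simp [hij, not_lt.mpr hij.le]

lemma skWeight_diag (n : ℕ) (h : ℕ → ℝ) (J : ℕ → ℕ → ℝ) (i : ℕ) :
    skWeight n h J i i = 0 := by
  simp [skWeight]

lemma half_sum {m : ℕ} (g : ℕ → ℕ → ℝ) (hsym : ∀ i j, g i j = g j i)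
    (hdiag : ∀ i, g i i = 0) :
    ∑ i ∈ range m, ∑ j ∈ range m, g i j
      = 2 * ∑ i ∈ range m, ∑ j ∈ range m, (if i < j then g i j else 0) := by
  have key : ∀ i ∈ range m, ∑ j ∈ range m, g i j
      = ∑ j ∈ range m, ((if i < j then g i j else 0) + (if j < i then g i j else 0)) := by
    intro i _
    refine Finset.sum_congr rfl fun j _ => ?_
    rcases lt_trichotomy i j with hij | hij | hij
    · simp [hij, not_lt.mpr hij.le]
    · subst hij; simp [hdiag]
    · simp [hij, not_lt.mpr hij.le]
  rw [Finset.sum_congr rfl key]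
  simp only [Finset.sum_add_distrib]
  have : ∑ i ∈ range m, ∑ j ∈ range m, (if j < i then g i j else 0)
       = ∑ i ∈ range m, ∑ j ∈ range m, (if i < j then g i j else 0) := by
    rw [Finset.sum_comm]
    exact Finset.sum_congr rfl fun i _ => Finset.sum_congr rfl fun j _ => by rw [hsym]
  rw [this]; ring

lemma isingH_congr (n : ℕ) (h : ℕ → ℝ) (J : ℕ → ℕ → ℝ) (x x' : ℕ → ℝ)
    (hx : ∀ i < n, x i = x' i) : isingH n h J x = isingH n h J x' := by
  unfold isingH
  congr 1
  · congr 1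
    exact Finset.sum_congr rfl fun i hi => by rw [hx i (mem_range.mp hi)]
  · refine Finset.sum_congr rfl fun i hi => Finset.sum_congr rfl fun j hj => ?_
    rw [hx i (mem_range.mp hi), hx j (mem_range.mp hj)]

lemma skH_expand (n : ℕ) (h : ℕ → ℝ) (J : ℕ → ℕ → ℝ) (y : ℕ → ℝ)
    (hy : y n * y n = 1) :
    skH n h J y = isingH n h J (fun i => y i * y n) := by
  unfold skH isingH
  rw [Finset.sum_range_succ]
  have hlast : ∑ j ∈ range (n+1), (if n < j then skWeight n h J n j * y n * y j else 0) = 0 := by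
    refine Finset.sum_eq_zero fun j hj => ?_
    have := mem_range.mp hj
    rw [if_neg (by omega)]
  rw [hlast, add_zero]
  have key : ∀ i ∈ range n,
      ∑ j ∈ range (n+1), (if i < j then skWeight n h J i j * y i * y j else 0)
      = (∑ j ∈ range n, if i < j then J i j * y i * y j else 0) + h i * y i * y n := by
    intro i hi
    have hi' := mem_range.mp hi
    rw [Finset.sum_range_succ, if_pos hi']
    congr 1
    · refine Finset.sum_congr rfl fun j hj => ?_
      have hj' := mem_range.mp hj
      by_cases hij : i < j
      · rw [if_pos hij, if_pos hij]
        unfold skWeight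
        rw [if_pos hij, if_neg (by omega)]
      · rw [if_neg hij, if_neg hij]
    · unfold skWeight
      rw [if_pos hi', if_pos rfl]
  rw [Finset.sum_congr rfl key, Finset.sum_add_distrib]
  have h2 : ∀ i ∈ range n, ∑ j ∈ range n, (if i < j then J i j * (y i * y n) * (y j * y n) else 0)
      = ∑ j ∈ range n, (if i < j then J i j * y i * y j else 0) := by
    intro i _
    refine Finset.sum_congr rfl fun j _ => ?_
    by_cases hij : i < j
    · rw [if_pos hij, if_pos hij]
      calc J i j * (y i * y n) * (y j * y n) = J i j * y i * y j * (y n * y n) := by ring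
        _ = J i j * y i * y j := by rw [hy, mul_one]
    · rw [if_neg hij, if_neg hij]
  rw [Finset.sum_congr rfl h2]
  have h3 : ∑ i ∈ range n, h i * (y i * y n) = ∑ i ∈ range n, h i * y i * y n := by
    exact Finset.sum_congr rfl fun i _ => by ring
  rw [h3]
  ring

lemma skH_eq_cut (n : ℕ) (h : ℕ → ℝ) (J : ℕ → ℕ → ℝ) (y : ℕ → ℝ) (S : Finset ℕ)
    (hS : S ⊆ range (n + 1))
    (h1 : ∀ i ∈ S, y i = 1)
    (h2 : ∀ i ∈ range (n + 1) \ S, y i = -1) :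
    skH n h J y = 2 * skCut n h J S - skTotalWeight n h J := by
  set w := skWeight n h J with hw
  set R := range (n + 1) with hR
  set g : ℕ → ℕ → ℝ := fun i j => w i j * y i * y j with hg
  have gsym : ∀ i j, g i j = g j i := by
    intro i j; simp only [hg, hw]; rw [skWeight_symm n h J i j]; ring
  have gdiag : ∀ i, g i i = 0 := by
    intro i; simp only [hg, hw]; rw [skWeight_diag n h J i]; ring
  -- split any double sum over R into four pieces
  have split : ∀ f : ℕ → ℕ → ℝ,
      ∑ i ∈ R, ∑ j ∈ R, f i j
      = (∑ i ∈ S, ∑ j ∈ S, f i j) + (∑ i ∈ S, ∑ j ∈ R \ S, f i j)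
        + ((∑ i ∈ R \ S, ∑ j ∈ S, f i j) + ∑ i ∈ R \ S, ∑ j ∈ R \ S, f i j) := by
    intro f
    rw [← Finset.sum_sdiff hS]
    have inner : ∀ i, ∑ j ∈ R, f i j = (∑ j ∈ S, f i j) + ∑ j ∈ R \ S, f i j := by
      intro i
      rw [← Finset.sum_sdiff hS]; ring
    simp only [inner]
    rw [Finset.sum_add_distrib, Finset.sum_add_distrib]
    ring
  have hgSS : ∑ i ∈ S, ∑ j ∈ S, g i j = ∑ i ∈ S, ∑ j ∈ S, w i j :=
    Finset.sum_congr rfl fun i hi => Finset.sum_congr rfl fun j hj => by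
      simp only [hg, hw]; rw [h1 i hi, h1 j hj]; ring
  have hgSC : ∑ i ∈ S, ∑ j ∈ R \ S, g i j = -∑ i ∈ S, ∑ j ∈ R \ S, w i j := by
    rw [← Finset.sum_neg_distrib]
    refine Finset.sum_congr rfl fun i hi => ?_
    rw [← Finset.sum_neg_distrib]
    refine Finset.sum_congr rfl fun j hj => ?_
    simp only [hg, hw]; rw [h1 i hi, h2 j hj]; ring
  have hgCS : ∑ i ∈ R \ S, ∑ j ∈ S, g i j = -∑ i ∈ R \ S, ∑ j ∈ S, w i j := by
    rw [← Finset.sum_neg_distrib]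
    refine Finset.sum_congr rfl fun i hi => ?_
    rw [← Finset.sum_neg_distrib]
    refine Finset.sum_congr rfl fun j hj => ?_
    simp only [hg, hw]; rw [h2 i hi, h1 j hj]; ring
  have hgCC : ∑ i ∈ R \ S, ∑ j ∈ R \ S, g i j = ∑ i ∈ R \ S, ∑ j ∈ R \ S, w i j :=
    Finset.sum_congr rfl fun i hi => Finset.sum_congr rfl fun j hj => by
      simp only [hg, hw]; rw [h2 i hi, h2 j hj]; ring
  have hswap : ∑ i ∈ R \ S, ∑ j ∈ S, w i j = ∑ i ∈ S, ∑ j ∈ R \ S, w i j := by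
    rw [Finset.sum_comm]
    exact Finset.sum_congr rfl fun i _ => Finset.sum_congr rfl fun j _ => skWeight_symm n h J _ _
  have Tg := split g
  have Tw := split w
  rw [hgSS, hgSC, hgCS, hgCC, hswap] at Tg
  rw [hswap] at Tw
  have hcut : skCut n h J S = ∑ i ∈ S, ∑ j ∈ R \ S, w i j := rfl
  have hW : skTotalWeight n h J
      = (1 / 2) * ∑ i ∈ R, ∑ j ∈ R, w i j := by
    unfold skTotalWeight
    rw [half_sum w (skWeight_symm n h J) (skWeight_diag n h J)]
    ring
  have hH : skH n h J y = -( (1 / 2) * ∑ i ∈ R, ∑ j ∈ R, g i j) := by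
    unfold skH
    rw [half_sum g gsym gdiag]
    ring
  rw [hH, hW, hcut, Tg, Tw]
  ring

/-- `min_{x ∈ {−1,+1}ⁿ} H(x) = min_{y ∈ {−1,+1}ⁿ⁺¹} H^SK(y) = 2·MC(G^SK) − W`. -/
theorem statement_0 (n : ℕ) (hn : 1 ≤ n) (h : ℕ → ℝ) (J : ℕ → ℕ → ℝ) :
    sInf (isingH n h J '' {x : ℕ → ℝ | ∀ i < n, x i = 1 ∨ x i = -1})
        = sInf (skH n h J '' {y : ℕ → ℝ | ∀ i < n + 1, y i = 1 ∨ y i = -1}) ∧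
    sInf (isingH n h J '' {x : ℕ → ℝ | ∀ i < n, x i = 1 ∨ x i = -1})
        = 2 * skMC n h J - skTotalWeight n h J := by
  classical
  set W := skTotalWeight n h J with hWdef
  -- set equality A = B
  have hAB : isingH n h J '' {x : ℕ → ℝ | ∀ i < n, x i = 1 ∨ x i = -1}
      = skH n h J '' {y : ℕ → ℝ | ∀ i < n + 1, y i = 1 ∨ y i = -1} := by
    ext v
    constructor
    · rintro ⟨x, hx, rfl⟩
      refine ⟨fun i => if i < n then x i else 1, ?_, ?_⟩
      · intro i hi
        by_cases hin : i < n
        · simpa [hin] using hx i hin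
        · simp [hin]
      · rw [skH_expand n h J _ (by simp)]
        refine isingH_congr n h J _ _ fun i hi => by simp [hi]
    · rintro ⟨y, hy, rfl⟩
      have hyn : y n = 1 ∨ y n = -1 := hy n (by omega)
      have hyn2 : y n * y n = 1 := by rcases hyn with e | e <;> rw [e] <;> norm_num
      refine ⟨fun i => y i * y n, ?_, (skH_expand n h J y hyn2).symm⟩
      intro i hi
      rcases hy i (by omega) with e | e <;> rcases hyn with e' | e' <;>
        simp [e, e']
  -- set equality B = affine image of cuts
  have hBC : skH n h J '' {y : ℕ → ℝ | ∀ i < n + 1, y i = 1 ∨ y i = -1}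
      = (fun c => 2 * c - W) '' (skCut n h J '' {S : Finset ℕ | S ⊆ range (n + 1)}) := by
    ext v
    constructor
    · rintro ⟨y, hy, rfl⟩
      set S : Finset ℕ := (range (n + 1)).filter (fun i => y i = 1) with hSdef
      refine ⟨skCut n h J S, ⟨S, fun i hi => (mem_filter.mp hi).1, rfl⟩, ?_⟩
      have := skH_eq_cut n h J y S (fun i hi => (mem_filter.mp hi).1)
        (fun i hi => (mem_filter.mp hi).2)
        (fun i hi => by
          rcases mem_sdiff.mp hi with ⟨hiR, hiS⟩
          rcases hy i (mem_range.mp hiR) with e | e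
          · exact absurd (mem_filter.mpr ⟨hiR, e⟩) hiS
          · exact e)
      rw [this]
    · rintro ⟨c, ⟨S, hS, rfl⟩, rfl⟩
      refine ⟨fun i => if i ∈ S then 1 else -1, ?_, ?_⟩
      · intro i _
        by_cases hiS : i ∈ S <;> simp [hiS]
      · exact skH_eq_cut n h J _ S hS (fun i hi => by simp [hi])
          (fun i hi => by simp [(mem_sdiff.mp hi).2])
  constructor
  · rw [hAB]
  · rw [hAB, hBC]
    have hfin : (skCut n h J '' {S : Finset ℕ | S ⊆ range (n + 1)}).Finite := by
      apply Set.Finite.image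
      have : {S : Finset ℕ | S ⊆ range (n + 1)} ⊆ ↑((range (n + 1)).powerset) := by
        intro S hS
        exact Finset.mem_coe.mpr (Finset.mem_powerset.mpr hS)
      exact Set.Finite.subset ((range (n + 1)).powerset.finite_toSet) this
    have hne : (skCut n h J '' {S : Finset ℕ | S ⊆ range (n + 1)}).Nonempty :=
      ⟨skCut n h J ∅, ⟨∅, by simp, rfl⟩⟩
    have hbdd : BddBelow (skCut n h J '' {S : Finset ℕ | S ⊆ range (n + 1)}) :=
      hfin.bddBelow
    have hmono : Monotone (fun c : ℝ => 2 * c - W) := by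
      intro a b hab; simp only; linarith
    have hcont : ContinuousAt (fun c : ℝ => 2 * c - W)
        (sInf (skCut n h J '' {S : Finset ℕ | S ⊆ range (n + 1)})) := by
      fun_prop
    rw [← Monotone.map_csInf_of_continuousAt hcont hmono hne hbdd]
    rfl
end

section
/- Let G^SK = (V, w) be the SK graph of an Ising Hamiltonian on n spins, with total weight W = Σ_{1≤i<j≤n+1} w(i,j). For every subset S ⊆ V, 2·c(S) = H^SK(y^(S)) + W, where y^(S) ∈ {−1,+1}^{n+1} is defined by y^(S)_v = +1 if v ∈ S and y^(S)_v = −1 otherwise. -/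
open Finset

lemma square_split (r : Finset ℕ) (f : ℕ → ℕ → ℝ) (hd : ∀ i, f i i = 0) :
    ∑ i ∈ r, ∑ j ∈ r, f i j
      = ∑ i ∈ r, ∑ j ∈ r, (if i < j then f i j + f j i else 0) := by
  have h1 : ∑ i ∈ r, ∑ j ∈ r, f i j
      = ∑ i ∈ r, ∑ j ∈ r, ((if i < j then f i j else 0) + (if j < i then f i j else 0)) := by
    refine Finset.sum_congr rfl fun i _ => Finset.sum_congr rfl fun j _ => ?_
    rcases lt_trichotomy i j with h | h | h
    · simp [h, h.not_gt]
    · subst h; simp [hd, lt_irrefl]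
    · simp [h, h.not_gt]
  have h2 : ∑ i ∈ r, ∑ j ∈ r, (if j < i then f i j else 0)
      = ∑ i ∈ r, ∑ j ∈ r, (if i < j then f j i else 0) := Finset.sum_comm
  have h3 : ∀ i j : ℕ, (if i < j then f i j + f j i else 0)
      = (if i < j then f i j else 0) + (if i < j then f j i else 0) := by
    intro i j; split_ifs <;> ring
  simp only [h1, h3, Finset.sum_add_distrib, h2]

/-- for every `S ⊆ V`, `2·c(S) = H^SK(y^(S)) + W`, where `y^(S)_v = +1` if
`v ∈ S` and `−1` otherwise. -/
theorem statement_1 (n : ℕ) (hn : 1 ≤ n) (h : ℕ → ℝ) (J : ℕ → ℕ → ℝ)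
    (S : Finset ℕ) (hS : S ⊆ range (n + 1)) :
    2 * skCut n h J S
      = skH n h J (fun v => if v ∈ S then 1 else -1) + skTotalWeight n h J := by
  classical
  set w := skWeight n h J with hw
  set F : ℕ → ℕ → ℝ := fun u v => if u ∈ S ∧ v ∉ S then w u v else 0 with hF
  -- Step 1: cut as a sum over the full square
  have hcut : skCut n h J S = ∑ u ∈ range (n + 1), ∑ v ∈ range (n + 1), F u v := by
    rw [skCut]
    have inner : ∀ u : ℕ, ∑ v ∈ range (n + 1) \ S, w u v
        = ∑ v ∈ range (n + 1), (if v ∉ S then w u v else 0) := by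
      intro u
      rw [Finset.sdiff_eq_filter, Finset.sum_filter]
    calc ∑ u ∈ S, ∑ v ∈ range (n + 1) \ S, w u v
        = ∑ u ∈ range (n + 1),
            (if u ∈ S then ∑ v ∈ range (n + 1), (if v ∉ S then w u v else 0) else 0) := by
          rw [← Finset.sum_filter, Finset.filter_mem_eq_inter,
            Finset.inter_eq_right.2 hS]
          exact Finset.sum_congr rfl fun u _ => inner u
      _ = ∑ u ∈ range (n + 1), ∑ v ∈ range (n + 1), F u v := by
          refine Finset.sum_congr rfl fun u _ => ?_
          split_ifs with hu
          · exact Finset.sum_congr rfl fun v _ => by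
              by_cases hv : v ∈ S <;> simp [hF, hu, hv]
          · simp [hF, hu]
  have hdiag : ∀ i, F i i = 0 := by
    intro i; simp only [hF]; simp
  rw [hcut, square_split _ F hdiag]
  rw [skH, skTotalWeight, Finset.mul_sum]
  rw [neg_add_eq_sub, ← Finset.sum_sub_distrib]
  refine Finset.sum_congr rfl fun i _ => ?_
  rw [Finset.mul_sum, ← Finset.sum_sub_distrib]
  refine Finset.sum_congr rfl fun j _ => ?_
  by_cases hij : i < j
  · by_cases hi : i ∈ S <;> by_cases hj : j ∈ S <;>
      · simp only [hF, hij, if_true, hi, hj, not_true, not_false_iff, and_true, and_false,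
          true_and, false_and, if_false]
        try simp only [hw]
        try rw [skWeight_symm n h J j i]
        ring
  · simp [hF, hij]
end

section
/- Let G^SK = (V, w) be the SK graph of an Ising Hamiltonian H on n spins, and let S* ⊆ V be a min-cut of G^SK (a subset attaining the minimum cut value MC(G^SK)). Define x* ∈ {−1,+1}^n by x*_i = y^(S*)_i · y^(S*)_{n+1} for i = 1,…,n, where y^(S*)_v = +1 if v ∈ S* and −1 otherwise. Then H(x*) = min_{x ∈ {−1,+1}^n} H(x), i.e., x* is a ground state of H. -/
open Finset

lemma double_split (R : Finset ℕ) (F : ℕ → ℕ → ℝ) (hsym : ∀ i j, F i j = F j i)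
    (hdiag : ∀ i, F i i = 0) :
    ∑ i ∈ R, ∑ j ∈ R, F i j = 2 * ∑ i ∈ R, ∑ j ∈ R, (if i < j then F i j else 0) := by
  have key : ∀ i j : ℕ, F i j = (if i < j then F i j else 0) + (if j < i then F i j else 0) := by
    intro i j
    rcases lt_trichotomy i j with h1 | h1 | h1
    · simp [h1, h1.not_gt]
    · simp [h1, hdiag]
    · simp [h1, h1.not_gt]
  calc ∑ i ∈ R, ∑ j ∈ R, F i j
      = ∑ i ∈ R, ∑ j ∈ R, ((if i < j then F i j else 0) + (if j < i then F i j else 0)) := by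
        apply Finset.sum_congr rfl; intro i _
        apply Finset.sum_congr rfl; intro j _
        exact key i j
    _ = (∑ i ∈ R, ∑ j ∈ R, (if i < j then F i j else 0))
        + ∑ i ∈ R, ∑ j ∈ R, (if j < i then F i j else 0) := by
        rw [← Finset.sum_add_distrib]
        apply Finset.sum_congr rfl; intro i _
        rw [Finset.sum_add_distrib]
    _ = (∑ i ∈ R, ∑ j ∈ R, (if i < j then F i j else 0))
        + ∑ i ∈ R, ∑ j ∈ R, (if i < j then F i j else 0) := by
        congr 1
        rw [Finset.sum_comm]
        apply Finset.sum_congr rfl; intro i _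
        apply Finset.sum_congr rfl; intro j _
        by_cases hij : i < j <;> simp [hij, hsym i j]
    _ = _ := by ring

lemma skH_cut (n : ℕ) (h : ℕ → ℝ) (J : ℕ → ℕ → ℝ) (S : Finset ℕ)
    (hS : S ⊆ range (n + 1)) :
    skH n h J (fun v => if v ∈ S then (1 : ℝ) else -1)
      = 2 * skCut n h J S - skTotalWeight n h J := by
  set y : ℕ → ℝ := fun v => if v ∈ S then (1 : ℝ) else -1 with hy
  set R := range (n + 1) with hR
  have hsym1 : ∀ i j, skWeight n h J i j * y i * y j = skWeight n h J j i * y j * y i := by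
    intro i j; rw [skWeight_symm]; ring
  have A : ∑ i ∈ R, ∑ j ∈ R, skWeight n h J i j * y i * y j = -2 * skH n h J y := by
    rw [double_split R _ hsym1 (fun i => by rw [skWeight_diag n h J i]; ring)]
    unfold skH; ring
  have B : ∑ i ∈ R, ∑ j ∈ R, skWeight n h J i j = 2 * skTotalWeight n h J := by
    rw [double_split R _ (skWeight_symm n h J) (skWeight_diag n h J)]
    unfold skTotalWeight; ring
  have hd : Disjoint S (R \ S) := Finset.disjoint_sdiff
  have split : ∀ F : ℕ → ℕ → ℝ, ∑ i ∈ R, ∑ j ∈ R, F i j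
      = ((∑ i ∈ S, ∑ j ∈ S, F i j) + ∑ i ∈ S, ∑ j ∈ R \ S, F i j)
        + ((∑ i ∈ R \ S, ∑ j ∈ S, F i j) + ∑ i ∈ R \ S, ∑ j ∈ R \ S, F i j) := by
    intro F
    have outer : ∀ f : ℕ → ℝ, ∑ i ∈ R, f i = (∑ i ∈ S, f i) + ∑ i ∈ R \ S, f i := by
      intro f; rw [← Finset.sum_sdiff hS]; ring
    rw [outer (fun i => ∑ j ∈ R, F i j)]
    congr 1 <;> (rw [← Finset.sum_add_distrib]; apply Finset.sum_congr rfl; intro i _; exact outer _)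
  have C : ∑ i ∈ R, ∑ j ∈ R, skWeight n h J i j * y i * y j
      = (∑ i ∈ R, ∑ j ∈ R, skWeight n h J i j) - 4 * skCut n h J S := by
    rw [split (fun i j => skWeight n h J i j * y i * y j), split (skWeight n h J)]
    have e1 : ∑ i ∈ S, ∑ j ∈ S, skWeight n h J i j * y i * y j
        = ∑ i ∈ S, ∑ j ∈ S, skWeight n h J i j := by
      apply Finset.sum_congr rfl; intro i hi
      apply Finset.sum_congr rfl; intro j hj
      simp [hy, hi, hj]
    have e2 : ∑ i ∈ S, ∑ j ∈ R \ S, skWeight n h J i j * y i * y j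
        = -∑ i ∈ S, ∑ j ∈ R \ S, skWeight n h J i j := by
      rw [← Finset.sum_neg_distrib]
      apply Finset.sum_congr rfl; intro i hi
      rw [← Finset.sum_neg_distrib]
      apply Finset.sum_congr rfl; intro j hj
      have hjS : j ∉ S := (Finset.mem_sdiff.mp hj).2
      simp [hy, hi, hjS]
    have e3 : ∑ i ∈ R \ S, ∑ j ∈ S, skWeight n h J i j * y i * y j
        = -∑ i ∈ S, ∑ j ∈ R \ S, skWeight n h J i j := by
      rw [Finset.sum_comm]
      rw [← Finset.sum_neg_distrib]
      apply Finset.sum_congr rfl; intro j hj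
      rw [← Finset.sum_neg_distrib]
      apply Finset.sum_congr rfl; intro i hi
      have hiS : i ∉ S := (Finset.mem_sdiff.mp hi).2
      rw [skWeight_symm n h J i j]
      simp [hy, hj, hiS]
    have e4 : ∑ i ∈ R \ S, ∑ j ∈ R \ S, skWeight n h J i j * y i * y j
        = ∑ i ∈ R \ S, ∑ j ∈ R \ S, skWeight n h J i j := by
      apply Finset.sum_congr rfl; intro i hi
      apply Finset.sum_congr rfl; intro j hj
      have hiS : i ∉ S := (Finset.mem_sdiff.mp hi).2
      have hjS : j ∉ S := (Finset.mem_sdiff.mp hj).2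
      simp [hy, hiS, hjS]
    have e5 : ∑ i ∈ R \ S, ∑ j ∈ S, skWeight n h J i j
        = ∑ i ∈ S, ∑ j ∈ R \ S, skWeight n h J i j := by
      rw [Finset.sum_comm]
      apply Finset.sum_congr rfl; intro i _
      apply Finset.sum_congr rfl; intro j _
      exact (skWeight_symm n h J _ _)
    rw [e1, e2, e3, e4, e5]
    unfold skCut; rw [← hR]; ring
  rw [A, B] at C
  linarith

lemma skH_eq_isingH (n : ℕ) (h : ℕ → ℝ) (J : ℕ → ℕ → ℝ) (y : ℕ → ℝ)
    (hyn : y n * y n = 1) :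
    skH n h J y = isingH n h J (fun i => y i * y n) := by
  unfold skH isingH
  rw [Finset.sum_range_succ]
  have outer0 : ∑ j ∈ range (n + 1),
      (if n < j then skWeight n h J n j * y n * y j else 0) = 0 := by
    apply Finset.sum_eq_zero; intro j hj
    have hj' : j ≤ n := Nat.lt_succ_iff.mp (Finset.mem_range.mp hj)
    have : ¬ n < j := Nat.not_lt.mpr hj'
    simp [this]
  rw [outer0, add_zero]
  have inner : ∀ i ∈ range n,
      (∑ j ∈ range (n + 1), if i < j then skWeight n h J i j * y i * y j else 0)
        = (∑ j ∈ range n, if i < j then J i j * y i * y j else 0) + h i * y i * y n := by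
    intro i hi
    have hin : i < n := Finset.mem_range.mp hi
    rw [Finset.sum_range_succ]
    congr 1
    · apply Finset.sum_congr rfl; intro j hj
      have hjn : j ≠ n := Nat.ne_of_lt (Finset.mem_range.mp hj)
      by_cases hij : i < j
      · simp [hij, skWeight, hjn]
      · simp [hij]
    · simp [hin, skWeight]
  rw [Finset.sum_congr rfl inner, Finset.sum_add_distrib]
  have h2 : ∑ i ∈ range n, ∑ j ∈ range n,
        (if i < j then J i j * (y i * y n) * (y j * y n) else 0)
      = ∑ i ∈ range n, ∑ j ∈ range n, (if i < j then J i j * y i * y j else 0) := by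
    apply Finset.sum_congr rfl; intro i _
    apply Finset.sum_congr rfl; intro j _
    by_cases hij : i < j
    · simp only [hij, if_true]
      have : J i j * (y i * y n) * (y j * y n) = J i j * y i * y j * (y n * y n) := by ring
      rw [this, hyn, mul_one]
    · simp [hij]
  rw [h2]
  have h3 : ∑ i ∈ range n, h i * (y i * y n) = ∑ i ∈ range n, h i * y i * y n := by
    apply Finset.sum_congr rfl; intro i _; ring
  rw [h3]
  ring

/-- if `S*` is a min-cut of the SK graph and
`x*_i = y^(S*)_i · y^(S*)_{n+1}` (0-indexed: the extra node is node `n`), then `x*` is a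
ground state of `H`. -/
theorem statement_2 (n : ℕ) (hn : 1 ≤ n) (h : ℕ → ℝ) (J : ℕ → ℕ → ℝ)
    (S : Finset ℕ) (hS : S ⊆ range (n + 1))
    (hmin : skCut n h J S = skMC n h J) :
    isingH n h J
        (fun i => (if i ∈ S then (1 : ℝ) else -1) * (if n ∈ S then (1 : ℝ) else -1))
      = sInf (isingH n h J '' {x : ℕ → ℝ | ∀ i < n, x i = 1 ∨ x i = -1}) := by
  -- finiteness of the family of cuts
  have hfin : ({T : Finset ℕ | T ⊆ range (n + 1)} : Set (Finset ℕ)).Finite := by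
    apply Set.Finite.subset (Finset.powerset (range (n + 1))).finite_toSet
    intro T hT
    rw [Finset.mem_coe, Finset.mem_powerset]
    exact hT
  have hbdd : BddBelow (skCut n h J '' {T : Finset ℕ | T ⊆ range (n + 1)}) :=
    (hfin.image _).bddBelow
  have hyn : (if n ∈ S then (1 : ℝ) else -1) * (if n ∈ S then (1 : ℝ) else -1) = 1 := by
    by_cases hnS : n ∈ S <;> simp [hnS]
  -- value of the candidate configuration
  have hxstar : isingH n h J
      (fun i => (if i ∈ S then (1 : ℝ) else -1) * (if n ∈ S then (1 : ℝ) else -1))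
      = 2 * skCut n h J S - skTotalWeight n h J := by
    have := skH_eq_isingH n h J (fun v => if v ∈ S then (1 : ℝ) else -1) hyn
    rw [← this]
    exact skH_cut n h J S hS
  -- every spin configuration comes from a cut
  have key : ∀ x : ℕ → ℝ, (∀ i < n, x i = 1 ∨ x i = -1) →
      ∃ T : Finset ℕ, T ⊆ range (n + 1) ∧
        isingH n h J x = 2 * skCut n h J T - skTotalWeight n h J := by
    intro x hx
    refine ⟨(range n).filter (fun i => x i = 1) ∪ {n}, ?_, ?_⟩
    · intro v hv
      rcases Finset.mem_union.mp hv with hv | hv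
      · have := (Finset.mem_filter.mp hv).1
        exact Finset.mem_range.mpr (Nat.lt_succ_of_lt (Finset.mem_range.mp this))
      · rw [Finset.mem_singleton.mp hv]
        exact Finset.mem_range.mpr (Nat.lt_succ_self n)
    · set T := (range n).filter (fun i => x i = 1) ∪ {n} with hT
      have hnT : n ∈ T := Finset.mem_union_right _ (Finset.mem_singleton_self n)
      have hTsub : T ⊆ range (n + 1) := by
        intro v hv
        rcases Finset.mem_union.mp hv with hv | hv
        · have := (Finset.mem_filter.mp hv).1
          exact Finset.mem_range.mpr (Nat.lt_succ_of_lt (Finset.mem_range.mp this))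
        · rw [Finset.mem_singleton.mp hv]
          exact Finset.mem_range.mpr (Nat.lt_succ_self n)
      have hynT : (if n ∈ T then (1 : ℝ) else -1) * (if n ∈ T then (1 : ℝ) else -1) = 1 := by
        simp [hnT]
      have e1 := skH_eq_isingH n h J (fun v => if v ∈ T then (1 : ℝ) else -1) hynT
      have e2 := skH_cut n h J T hTsub
      have e3 : isingH n h J
          (fun i => (if i ∈ T then (1 : ℝ) else -1) * (if n ∈ T then (1 : ℝ) else -1))
          = isingH n h J x := by
        apply isingH_congr
        intro i hi
        have hin : i ≠ n := Nat.ne_of_lt hi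
        rcases hx i hi with h1 | h1
        · have hiT : i ∈ T :=
            Finset.mem_union_left _ (Finset.mem_filter.mpr ⟨Finset.mem_range.mpr hi, h1⟩)
          simp [hiT, hnT, h1]
        · have hiT : i ∉ T := by
            intro hmem
            rcases Finset.mem_union.mp hmem with hmem | hmem
            · have := (Finset.mem_filter.mp hmem).2
              rw [h1] at this; norm_num at this
            · exact hin (Finset.mem_singleton.mp hmem)
          simp [hiT, hnT, h1]
      rw [← e3, ← e1, e2]
  -- the candidate value is a least element of the image set
  have hleast : IsLeast (isingH n h J '' {x : ℕ → ℝ | ∀ i < n, x i = 1 ∨ x i = -1})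
      (2 * skCut n h J S - skTotalWeight n h J) := by
    constructor
    · refine ⟨fun i => (if i ∈ S then (1 : ℝ) else -1) * (if n ∈ S then (1 : ℝ) else -1),
        ?_, hxstar⟩
      intro i _
      by_cases h1 : i ∈ S <;> by_cases h2 : n ∈ S <;> simp [h1, h2]
    · rintro a ⟨x, hx, rfl⟩
      obtain ⟨T, hTsub, hval⟩ := key x hx
      rw [hval]
      have hle : skMC n h J ≤ skCut n h J T :=
        csInf_le hbdd ⟨T, hTsub, rfl⟩
      rw [← hmin] at hle
      linarith
  rw [hxstar, hleast.csInf_eq.symm]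
end

section
/- Let G = (V, w) be a weighted graph and u, v distinct nodes forming an antipolar pair (ν_G({u,v}) < 0). Let G' = flip(G, u) be the graph obtained from G by negating the weights of all edges incident at u. Then {u, v} is non-separable in G'. -/
open Finset

variable {V : Type*}

/-- Cut capacity of a cut `S` in the weighted graph `(V, w)`:
`c(S) = Σ_{u ∈ S, v ∈ V \ S} w(u,v)`. -/
noncomputable def cutVal [Fintype V] [DecidableEq V] (w : V → V → ℝ) (S : Finset V) : ℝ :=
  ∑ u ∈ S, ∑ v ∈ Sᶜ, w u v

/-- Minimum cut value `MC(G) = min_{S ⊆ V} c(S)` (cuts range over all subsets). -/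
noncomputable def minCutVal [Fintype V] [DecidableEq V] (w : V → V → ℝ) : ℝ :=
  sInf (Set.range (cutVal w))

/-- `S` separates `X` iff `X ∩ S ∉ {∅, X}`. -/
def Separates [DecidableEq V] (S X : Finset V) : Prop :=
  X ∩ S ≠ ∅ ∧ X ∩ S ≠ X

/-- `X` is non-separable: no min-cut separates `X`. -/
def NonSepSet [Fintype V] [DecidableEq V] (w : V → V → ℝ) (X : Finset V) : Prop :=
  ∀ S : Finset V, cutVal w S = minCutVal w → ¬ Separates S X

/-- `X` is weakly non-separable: some min-cut separates `X` and some min-cut does not. -/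
def WeakNonSepSet [Fintype V] [DecidableEq V] (w : V → V → ℝ) (X : Finset V) : Prop :=
  (∃ S : Finset V, cutVal w S = minCutVal w ∧ Separates S X) ∧
  (∃ S : Finset V, cutVal w S = minCutVal w ∧ ¬ Separates S X)

/-- Non-separability index
`ν_G(X) = min_{S ⊆ V, S ⊖ X} c(S) − min_{S ⊆ V, ¬(S ⊖ X)} c(S)`. -/
noncomputable def nuIdx [Fintype V] [DecidableEq V] (w : V → V → ℝ) (X : Finset V) : ℝ :=
  sInf (cutVal w '' {S : Finset V | Separates S X}) -
  sInf (cutVal w '' {S : Finset V | ¬ Separates S X})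

/-- `flip(G, u)`: negate the weights of all edges incident at `u`. -/
noncomputable def flipNode [DecidableEq V] (w : V → V → ℝ) (u : V) (a b : V) : ℝ :=
  if (a = u ∧ b ≠ u) ∨ (b = u ∧ a ≠ u) then -w a b else w a b

lemma cutVal_compl [Fintype V] [DecidableEq V] (w : V → V → ℝ)
    (hsymm : ∀ a b, w a b = w b a) (S : Finset V) : cutVal w Sᶜ = cutVal w S := by
  unfold cutVal
  rw [compl_compl, Finset.sum_comm]
  exact Finset.sum_congr rfl fun a _ => Finset.sum_congr rfl fun b _ => hsymm b a

lemma flipNode_symm [DecidableEq V] (w : V → V → ℝ) (hsymm : ∀ a b, w a b = w b a)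
    (u a b : V) : flipNode w u a b = flipNode w u b a := by
  unfold flipNode
  rw [hsymm a b]
  exact if_congr (by tauto) rfl rfl

lemma flip_cut_mem [Fintype V] [DecidableEq V] (w : V → V → ℝ)
    (hsymm : ∀ a b, w a b = w b a) (hdiag : ∀ a, w a a = 0)
    (u : V) (S : Finset V) (hu : u ∈ S) :
    cutVal (flipNode w u) S = cutVal w (S.erase u) - ∑ b, w u b := by
  have hcompl : (S.erase u)ᶜ = insert u Sᶜ := by
    ext x; simp [Finset.mem_erase]
  have huc : u ∉ Sᶜ := by simp [hu]
  have hsplit : ∑ a, w u a = ∑ a ∈ S.erase u, w u a + ∑ a ∈ Sᶜ, w u a := by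
    have hunion : S.erase u ∪ Sᶜ = Finset.univ.erase u := by
      ext x; by_cases hx : x = u <;> simp [hx, hu, Finset.mem_erase] <;> tauto
    have hdisj : Disjoint (S.erase u) Sᶜ := by
      refine Finset.disjoint_left.mpr fun x hx hx' => ?_
      simp at hx hx'; exact hx' hx.2
    rw [← Finset.sum_union hdisj, hunion,
      Finset.sum_erase _ (by simp [hdiag])]
  unfold cutVal
  rw [← Finset.sum_erase_add _ _ hu, hcompl]
  have h1 : ∑ b ∈ Sᶜ, flipNode w u u b = - ∑ b ∈ Sᶜ, w u b := by
    rw [← Finset.sum_neg_distrib]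
    refine Finset.sum_congr rfl fun b hb => ?_
    have : b ≠ u := fun h => huc (h ▸ hb)
    simp [flipNode, this]
  have h2 : ∀ a ∈ S.erase u, ∑ b ∈ Sᶜ, flipNode w u a b = ∑ b ∈ Sᶜ, w a b := by
    intro a ha
    refine Finset.sum_congr rfl fun b hb => ?_
    have hb' : b ≠ u := fun h => huc (h ▸ hb)
    have ha' : a ≠ u := (Finset.mem_erase.mp ha).1
    simp [flipNode, ha', hb']
  rw [h1, Finset.sum_congr rfl h2]
  have h3 : ∀ a ∈ S.erase u, ∑ b ∈ insert u Sᶜ, w a b = w a u + ∑ b ∈ Sᶜ, w a b := by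
    intro a _; rw [Finset.sum_insert huc]
  rw [Finset.sum_congr rfl h3, Finset.sum_add_distrib, hsplit]
  have : ∑ a ∈ S.erase u, w a u = ∑ a ∈ S.erase u, w u a :=
    Finset.sum_congr rfl fun a _ => hsymm a u
  rw [this]; ring

def toggle [DecidableEq V] (u : V) (S : Finset V) : Finset V :=
  if u ∈ S then S.erase u else insert u S

lemma toggle_toggle [DecidableEq V] (u : V) (S : Finset V) : toggle u (toggle u S) = S := by
  unfold toggle
  by_cases hu : u ∈ S
  · simp [hu, Finset.insert_erase hu]
  · simp [hu, Finset.erase_insert hu]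

lemma sep_iff [DecidableEq V] (u v : V) (huv : u ≠ v) (S : Finset V) :
    Separates S {u, v} ↔ ((u ∈ S ∧ v ∉ S) ∨ (v ∈ S ∧ u ∉ S)) := by
  unfold Separates
  rw [Ne, Ne, Finset.inter_eq_left, Finset.insert_subset_iff, Finset.singleton_subset_iff,
    Finset.eq_empty_iff_forall_notMem]
  constructor
  · rintro ⟨h1, h2⟩
    by_cases hu : u ∈ S <;> by_cases hv : v ∈ S
    · exact absurd ⟨hu, hv⟩ h2
    · exact Or.inl ⟨hu, hv⟩
    · exact Or.inr ⟨hv, hu⟩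
    · refine absurd (fun x hx => ?_) h1
      rcases Finset.mem_inter.mp hx with ⟨hx1, hx2⟩
      rcases Finset.mem_insert.mp hx1 with rfl | hx1
      · exact hu hx2
      · rw [Finset.mem_singleton.mp hx1] at hx2; exact hv hx2
  · rintro (⟨hu, hv⟩ | ⟨hv, hu⟩)
    · exact ⟨fun h => h u (Finset.mem_inter.mpr ⟨by simp, hu⟩), fun h => hv h.2⟩
    · exact ⟨fun h => h v (Finset.mem_inter.mpr ⟨by simp, hv⟩), fun h => hu h.1⟩

lemma sep_toggle [DecidableEq V] (u v : V) (huv : u ≠ v) (S : Finset V) :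
    Separates S {u, v} ↔ ¬ Separates (toggle u S) {u, v} := by
  rw [sep_iff u v huv, sep_iff u v huv]
  unfold toggle
  by_cases hu : u ∈ S <;> simp [hu, Finset.mem_erase, huv, Ne.symm huv] <;> tauto

lemma flipNode_flip_cut [Fintype V] [DecidableEq V] (w : V → V → ℝ)
    (hsymm : ∀ a b, w a b = w b a) (hdiag : ∀ a, w a a = 0) (u : V) (S : Finset V) :
    cutVal (flipNode w u) S = cutVal w (toggle u S) - ∑ b, w u b := by
  by_cases hu : u ∈ S
  · rw [toggle, if_pos hu]; exact flip_cut_mem w hsymm hdiag u S hu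
  · have hu' : u ∈ Sᶜ := by simp [hu]
    calc cutVal (flipNode w u) S = cutVal (flipNode w u) Sᶜ :=
          (cutVal_compl _ (flipNode_symm w hsymm u) S).symm
      _ = cutVal w (Sᶜ.erase u) - ∑ b, w u b := flip_cut_mem w hsymm hdiag u Sᶜ hu'
      _ = cutVal w ((Sᶜ.erase u)ᶜ) - ∑ b, w u b := by rw [cutVal_compl w hsymm]
      _ = cutVal w (toggle u S) - ∑ b, w u b := by
          rw [toggle, if_neg hu]
          have hset : (Sᶜ.erase u)ᶜ = insert u S := by
            ext x; simp [Finset.mem_erase]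
          rw [hset]

/-- if `u, v` form an antipolar pair in `G`, then `{u, v}` is non-separable
in `flip(G, u)`. -/
theorem statement_12 [Fintype V] [DecidableEq V] [Nonempty V]
    (w : V → V → ℝ) (hsymm : ∀ a b, w a b = w b a) (hdiag : ∀ a, w a a = 0)
    (u v : V) (huv : u ≠ v) (hanti : nuIdx w {u, v} < 0) :
    NonSepSet (flipNode w u) {u, v} := by
  set D := ∑ b, w u b with hD
  intro S hS hsep
  set T := toggle u S with hT
  have hTsep : ¬ Separates T {u, v} := (sep_toggle u v huv S).mp hsep
  -- bounded below / nonempty facts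
  have hbdd : BddBelow (Set.range (cutVal w)) := (Set.finite_range _).bddBelow
  have hbdd' : BddBelow (Set.range (cutVal (flipNode w u))) := (Set.finite_range _).bddBelow
  have hmin_le : ∀ R : Finset V, minCutVal w ≤ cutVal w R :=
    fun R => csInf_le hbdd ⟨R, rfl⟩
  have hmin_le' : ∀ R : Finset V, minCutVal (flipNode w u) ≤ cutVal (flipNode w u) R :=
    fun R => csInf_le hbdd' ⟨R, rfl⟩
  -- T is a min-cut of w
  have hTval : cutVal w T = minCutVal (flipNode w u) + D := by
    have := flipNode_flip_cut w hsymm hdiag u S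
    rw [hS] at this; linarith
  have hTmin : cutVal w T = minCutVal w := by
    refine le_antisymm ?_ (hmin_le T)
    refine le_csInf ⟨cutVal w ∅, ⟨∅, rfl⟩⟩ ?_
    rintro x ⟨R, rfl⟩
    have h2 := hmin_le' (toggle u R)
    have h1' : cutVal (flipNode w u) (toggle u R) = cutVal w R - D := by
      have := flipNode_flip_cut w hsymm hdiag u (toggle u R)
      rwa [toggle_toggle] at this
    linarith
  -- now derive nuIdx ≥ 0
  have hfin1 : (cutVal w '' {R : Finset V | Separates R {u, v}}).Finite :=
    Set.Finite.image _ (Set.toFinite _)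
  have hfin2 : (cutVal w '' {R : Finset V | ¬ Separates R {u, v}}).Finite :=
    Set.Finite.image _ (Set.toFinite _)
  have hne1 : (cutVal w '' {R : Finset V | Separates R {u, v}}).Nonempty :=
    ⟨cutVal w S, S, hsep, rfl⟩
  have h2le : sInf (cutVal w '' {R : Finset V | ¬ Separates R {u, v}}) ≤ minCutVal w := by
    rw [← hTmin]
    exact csInf_le hfin2.bddBelow ⟨T, hTsep, rfl⟩
  have h1ge : minCutVal w ≤ sInf (cutVal w '' {R : Finset V | Separates R {u, v}}) := by
    refine le_csInf hne1 ?_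
    rintro x ⟨R, _, rfl⟩
    exact hmin_le R
  have : (0:ℝ) ≤ nuIdx w {u, v} := by
    unfold nuIdx; linarith
  linarith
end

section
/- Let G = (V, w) be a weighted graph, x, y distinct nodes forming an antipolar pair (ν_G({x,y}) < 0), and Y ⊆ V a non-separable set with y ∈ Y and x ∉ Y. Then for every z ∈ Y, the pair (x, z) is antipolar, i.e., ν_G({x,z}) < 0. -/
open Finset

variable {V : Type*}

lemma cutVal_empty [Fintype V] [DecidableEq V] (w : V → V → ℝ) :
    cutVal w (∅ : Finset V) = 0 := by simp [cutVal]

lemma minCut_le [Fintype V] [DecidableEq V] (w : V → V → ℝ) (S : Finset V) :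
    minCutVal w ≤ cutVal w S :=
  csInf_le (Set.Finite.bddBelow (Set.finite_range _)) (Set.mem_range_self S)

lemma exists_minCut [Fintype V] [DecidableEq V] (w : V → V → ℝ) :
    ∃ S : Finset V, cutVal w S = minCutVal w := by
  have h := Set.Nonempty.csInf_mem ⟨cutVal w ∅, Set.mem_range_self ∅⟩
    (Set.finite_range (cutVal w))
  obtain ⟨S, hS⟩ := h
  exact ⟨S, hS⟩

lemma empty_not_sep [DecidableEq V] (X : Finset V) : ¬ Separates (∅ : Finset V) X := by
  simp [Separates]

lemma allMinCutSep [Fintype V] [DecidableEq V] (w : V → V → ℝ) (X : Finset V)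
    (h : nuIdx w X < 0) : ∀ S, cutVal w S = minCutVal w → Separates S X := by
  intro S hS
  by_contra hsep
  have hfin1 : (cutVal w '' {S : Finset V | ¬ Separates S X}).Finite := Set.toFinite _
  have h1 : sInf (cutVal w '' {S : Finset V | ¬ Separates S X}) ≤ minCutVal w := by
    rw [← hS]; exact csInf_le hfin1.bddBelow ⟨S, hsep, rfl⟩
  by_cases hsepne : ({S : Finset V | Separates S X}).Nonempty
  · have h2 : minCutVal w ≤ sInf (cutVal w '' {S : Finset V | Separates S X}) := by
      apply le_csInf (hsepne.image _)
      rintro b ⟨T, _, rfl⟩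
      exact minCut_le w T
    unfold nuIdx at h; linarith
  · rw [Set.not_nonempty_iff_eq_empty] at hsepne
    have h0 : sInf (cutVal w '' {S : Finset V | Separates S X}) = 0 := by
      rw [hsepne]; simp [Real.sInf_empty]
    have h3 : sInf (cutVal w '' {S : Finset V | ¬ Separates S X}) ≤ 0 := by
      calc sInf (cutVal w '' {S : Finset V | ¬ Separates S X})
          ≤ cutVal w (∅ : Finset V) :=
            csInf_le hfin1.bddBelow ⟨∅, empty_not_sep X, rfl⟩
        _ = 0 := cutVal_empty w
    unfold nuIdx at h; linarith

lemma nuNeg [Fintype V] [DecidableEq V] (w : V → V → ℝ) (X : Finset V)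
    (h : ∀ S, cutVal w S = minCutVal w → Separates S X) : nuIdx w X < 0 := by
  obtain ⟨S0, hS0⟩ := exists_minCut w
  have hsep0 := h S0 hS0
  have hfin1 : (cutVal w '' {S : Finset V | ¬ Separates S X}).Finite := Set.toFinite _
  have hne1 : (cutVal w '' {S : Finset V | ¬ Separates S X}).Nonempty :=
    ⟨cutVal w ∅, ∅, empty_not_sep X, rfl⟩
  obtain ⟨T, hT, hTval⟩ := hne1.csInf_mem hfin1
  have hTgt : minCutVal w < cutVal w T :=
    lt_of_le_of_ne (minCut_le w T) (fun he => hT (h T he.symm))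
  have h2 : sInf (cutVal w '' {S : Finset V | Separates S X}) ≤ minCutVal w := by
    rw [← hS0]
    exact csInf_le (Set.toFinite _).bddBelow ⟨S0, hsep0, rfl⟩
  unfold nuIdx
  linarith [hTval, hTgt, h2]

/-- if `(x, y)` is an antipolar pair and `y ∈ Y` for a non-separable set `Y`
(with `x ∉ Y`), then `(x, z)` is an antipolar pair for every `z ∈ Y`. -/
theorem statement_13 [Fintype V] [DecidableEq V] [Nonempty V]
    (w : V → V → ℝ) (hsymm : ∀ a b, w a b = w b a) (hdiag : ∀ a, w a a = 0)
    (x y : V) (hxy : x ≠ y) (hanti : nuIdx w {x, y} < 0)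
    (Y : Finset V) (hY : NonSepSet w Y) (hyY : y ∈ Y) (hxY : x ∉ Y) :
    ∀ z ∈ Y, nuIdx w {x, z} < 0 := by
  intro z hzY
  have hxz : x ≠ z := fun h => hxY (h ▸ hzY)
  apply nuNeg
  intro S hS
  have hsepxy := allMinCutSep w {x, y} hanti S hS
  have hnYsep := hY S hS
  rcases not_and_or.mp hnYsep with hc | hc
  · rw [not_not] at hc
    have hyS : y ∉ S := fun hyS =>
      (Finset.eq_empty_iff_forall_notMem.mp hc y) (Finset.mem_inter.mpr ⟨hyY, hyS⟩)
    have hzS : z ∉ S := fun hzS =>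
      (Finset.eq_empty_iff_forall_notMem.mp hc z) (Finset.mem_inter.mpr ⟨hzY, hzS⟩)
    have hxS : x ∈ S := by
      obtain ⟨a, ha⟩ := Finset.nonempty_iff_ne_empty.mpr hsepxy.1
      rw [Finset.mem_inter] at ha
      rcases Finset.mem_insert.mp ha.1 with h | h
      · exact h ▸ ha.2
      · exact absurd (Finset.mem_singleton.mp h ▸ ha.2) hyS
    constructor
    · exact Finset.ne_empty_of_mem (Finset.mem_inter.mpr ⟨Finset.mem_insert_self x _, hxS⟩)
    · intro he
      have : z ∈ ({x, z} : Finset V) ∩ S := by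
        rw [he]; exact Finset.mem_insert.mpr (Or.inr (Finset.mem_singleton_self z))
      exact hzS (Finset.mem_inter.mp this).2
  · rw [not_not] at hc
    have hsub : Y ⊆ S := fun a ha => (Finset.mem_inter.mp (hc ▸ ha)).2
    have hzS : z ∈ S := hsub hzY
    have hxS : x ∉ S := by
      intro hxS
      apply hsepxy.2
      apply Finset.inter_eq_left.mpr
      intro a ha
      rcases Finset.mem_insert.mp ha with h | h
      · exact h ▸ hxS
      · exact Finset.mem_singleton.mp h ▸ hsub hyY
    constructor
    · exact Finset.ne_empty_of_mem
        (Finset.mem_inter.mpr ⟨Finset.mem_insert.mpr (Or.inr (Finset.mem_singleton_self z)), hzS⟩)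
    · intro he
      have : x ∈ ({x, z} : Finset V) ∩ S := by
        rw [he]; exact Finset.mem_insert_self x _
      exact hxS (Finset.mem_inter.mp this).2
end

section
/- Let G = (V, w) be a weighted graph and x, y, z nodes with x ≠ y, y ≠ z, x ≠ z, such that (x, y) and (y, z) are both antipolar pairs (ν_G({x,y}) < 0 and ν_G({y,z}) < 0). Then {x, z} is non-separable. -/
open Finset

variable {V : Type*}

lemma sep_pair_iff [DecidableEq V] {S : Finset V} {a b : V} (hab : a ≠ b) :
    Separates S {a, b} ↔ ((a ∈ S ∧ b ∉ S) ∨ (a ∉ S ∧ b ∈ S)) := by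
  unfold Separates
  constructor
  · rintro ⟨h1, h2⟩
    by_cases ha : a ∈ S <;> by_cases hb : b ∈ S
    · exact absurd (by ext v; simp [Finset.mem_insert]; rintro (rfl|rfl) <;> assumption) h2
    · exact Or.inl ⟨ha, hb⟩
    · exact Or.inr ⟨ha, hb⟩
    · exact absurd (by ext v; simp [Finset.mem_insert]; rintro (rfl|rfl) <;> simp_all) h1
  · rintro (⟨ha, hb⟩ | ⟨ha, hb⟩)
    · refine ⟨?_, ?_⟩
      · intro h
        have : a ∈ ({a, b} : Finset V) ∩ S := by simp [ha]
        simp [h] at this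
      · intro h
        have : b ∈ ({a, b} : Finset V) ∩ S := by rw [h]; simp
        simp [hb] at this
    · refine ⟨?_, ?_⟩
      · intro h
        have : b ∈ ({a, b} : Finset V) ∩ S := by simp [hb]
        simp [h] at this
      · intro h
        have : a ∈ ({a, b} : Finset V) ∩ S := by rw [h]; simp
        simp [ha] at this

lemma mincut_separates [Fintype V] [DecidableEq V] (w : V → V → ℝ) (X : Finset V)
    (hsep : {S : Finset V | Separates S X}.Nonempty) (h : nuIdx w X < 0) :
    ∀ S : Finset V, cutVal w S = minCutVal w → Separates S X := by
  intro S hS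
  by_contra hn
  set A := cutVal w '' {S : Finset V | Separates S X} with hA
  set B := cutVal w '' {S : Finset V | ¬ Separates S X} with hB
  have hAfin : A.Finite := (Set.finite_univ.image _).subset (Set.image_subset_range _ _ |>.trans
    (by rw [← Set.image_univ]))
  have hBfin : B.Finite := (Set.finite_univ.image _).subset (Set.image_subset_range _ _ |>.trans
    (by rw [← Set.image_univ]))
  have hrfin : (Set.range (cutVal w) : Set ℝ).Finite := by
    rw [← Set.image_univ]; exact Set.finite_univ.image _
  have hANe : A.Nonempty := hsep.image _
  have hSB : cutVal w S ∈ B := ⟨S, hn, rfl⟩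
  have h1 : sInf B ≤ cutVal w S := csInf_le hBfin.bddBelow hSB
  have h2 : minCutVal w ≤ sInf A := by
    apply csInf_le_csInf hrfin.bddBelow hANe
    exact (Set.image_subset_range _ _ |>.trans (le_refl _)) |>.trans (by intro r hr; exact hr)
  have h3 : sInf A < sInf B := by
    have := h
    unfold nuIdx at this
    linarith
  rw [hS] at h1
  linarith

/-- if `(x, y)` and `(y, z)` are antipolar pairs, then `{x, z}` is
non-separable. -/
theorem statement_14 [Fintype V] [DecidableEq V] [Nonempty V]
    (w : V → V → ℝ) (hsymm : ∀ a b, w a b = w b a) (hdiag : ∀ a, w a a = 0)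
    (x y z : V) (hxy : x ≠ y) (hyz : y ≠ z) (hxz : x ≠ z)
    (h1 : nuIdx w {x, y} < 0) (h2 : nuIdx w {y, z} < 0) :
    NonSepSet w {x, z} := by
  intro S hS hsepxz
  have hxySep : {T : Finset V | Separates T {x, y}}.Nonempty :=
    ⟨{x}, (sep_pair_iff hxy).mpr (Or.inl ⟨Finset.mem_singleton_self x,
      by simp [Finset.mem_singleton, (Ne.symm hxy)]⟩)⟩
  have hyzSep : {T : Finset V | Separates T {y, z}}.Nonempty :=
    ⟨{y}, (sep_pair_iff hyz).mpr (Or.inl ⟨Finset.mem_singleton_self y,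
      by simp [Finset.mem_singleton, (Ne.symm hyz)]⟩)⟩
  have hxyS := (sep_pair_iff hxy).mp (mincut_separates w {x, y} hxySep h1 S hS)
  have hyzS := (sep_pair_iff hyz).mp (mincut_separates w {y, z} hyzSep h2 S hS)
  have hxzS := (sep_pair_iff hxz).mp hsepxz
  rcases hxzS with ⟨hx, hz⟩ | ⟨hx, hz⟩ <;>
    rcases hxyS with ⟨hx', hy⟩ | ⟨hx', hy⟩ <;>
    rcases hyzS with ⟨hy', hz'⟩ | ⟨hy', hz'⟩ <;> tauto
end

section
/- Let G = (V, w) be a weighted graph and X ⊆ V a set with at least two elements, and set Y = V \ X. Then ν_G(X) ≥ min over nonempty proper subsets Z ⊊ X of ( c(Z, X\Z) − P_X(Z) ), where c(A,B) = Σ_{a∈A, b∈B} w(a,b), c_abs(A,B) = Σ_{a∈A, b∈B} |w(a,b)|, and P_X(Z) = min( (1/2)·Σ_{u∈Y} |Σ_{v∈Z} w(u,v) − Σ_{v∈X\Z} w(u,v)| , c_abs(Z, Y) , c_abs(X\Z, Y) ). -/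
open Finset

variable {V : Type*}

private lemma flip_sum {V : Type*} (w : V → V → ℝ)
    (hsymm : ∀ a b, w a b = w b a) (A B : Finset V) :
    ∑ a ∈ A, ∑ b ∈ B, w a b = ∑ b ∈ B, ∑ a ∈ A, w b a := by
  rw [Finset.sum_comm]
  exact Finset.sum_congr rfl fun b _ => Finset.sum_congr rfl fun a _ => hsymm a b

private lemma flip_sum_abs {V : Type*} (w : V → V → ℝ)
    (hsymm : ∀ a b, w a b = w b a) (A B : Finset V) :
    ∑ a ∈ A, ∑ b ∈ B, |w a b| = ∑ b ∈ B, ∑ a ∈ A, |w b a| := by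
  rw [Finset.sum_comm]
  exact Finset.sum_congr rfl fun b _ => Finset.sum_congr rfl fun a _ => by rw [hsymm a b]

/-- Non-separability index lower bound:
`ν_G(X) ≥ min_{∅ ≠ Z ⊊ X} ( c(Z, X\Z) − P_X(Z) )` where
`P_X(Z) = min( ½ Σ_{u ∈ Y} |Σ_{v ∈ Z} w(u,v) − Σ_{v ∈ X\Z} w(u,v)|, c_abs(Z,Y), c_abs(X\Z,Y) )`
and `Y = V \ X`. -/
theorem statement_15 [Fintype V] [DecidableEq V] [Nonempty V]
    (w : V → V → ℝ) (hsymm : ∀ a b, w a b = w b a) (hdiag : ∀ a, w a a = 0)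
    (X : Finset V) (hX : 2 ≤ X.card) :
    sInf ((fun Z : Finset V =>
        (∑ a ∈ Z, ∑ b ∈ X \ Z, w a b) -
          min (min ((1 / 2) * ∑ u ∈ Xᶜ, |(∑ v ∈ Z, w u v) - ∑ v ∈ X \ Z, w u v|)
                   (∑ a ∈ Z, ∑ b ∈ Xᶜ, |w a b|))
              (∑ a ∈ X \ Z, ∑ b ∈ Xᶜ, |w a b|)) ''
      {Z : Finset V | Z ⊆ X ∧ Z ≠ ∅ ∧ Z ≠ X}) ≤ nuIdx w X := by
  classical
  obtain ⟨x, hx, y, hy, hxy⟩ := Finset.one_lt_card.mp hX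
  -- the set of separating cuts is nonempty
  have hsepne : ({S : Finset V | Separates S X}).Nonempty := by
    refine ⟨{x}, ?_, ?_⟩
    · rw [Finset.inter_singleton_of_mem hx]; simp
    · rw [Finset.inter_singleton_of_mem hx]
      intro h
      rw [← h] at hy
      exact hxy (Finset.mem_singleton.mp hy).symm
  have hfin1 : ((cutVal w '' {S : Finset V | Separates S X}) : Set ℝ).Finite :=
    (Set.toFinite _).image _
  obtain ⟨S, hSsep, hSval⟩ := (hsepne.image _).csInf_mem hfin1
  -- names
  set Z : Finset V := X ∩ S with hZdef
  set W : Finset V := X \ Z with hWdef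
  set A : Finset V := S \ X with hAdef
  set B : Finset V := Sᶜ \ X with hBdef
  set ns : ℝ := sInf (cutVal w '' {S : Finset V | ¬ Separates S X}) with hns
  have hmemZ : ∀ u, u ∈ Z ↔ u ∈ X ∧ u ∈ S := by intro u; simp [hZdef]
  have hmemW : ∀ u, u ∈ W ↔ u ∈ X ∧ u ∉ S := by
    intro u; simp only [hWdef, hZdef, Finset.mem_sdiff, Finset.mem_inter]; tauto
  have hmemA : ∀ u, u ∈ A ↔ u ∈ S ∧ u ∉ X := by intro u; simp [hAdef]
  have hmemB : ∀ u, u ∈ B ↔ u ∉ S ∧ u ∉ X := by intro u; simp [hBdef]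
  -- set decompositions
  have hSu : S = Z ∪ A := by
    ext u; simp only [Finset.mem_union, hmemZ, hmemA]; tauto
  have hScu : Sᶜ = W ∪ B := by
    ext u; simp only [Finset.mem_union, hmemW, hmemB, Finset.mem_compl]; tauto
  have hAcu : Aᶜ = Z ∪ (W ∪ B) := by
    ext u; simp only [Finset.mem_union, hmemZ, hmemW, hmemB, Finset.mem_compl, hmemA]; tauto
  have hSXu : S ∪ X = A ∪ (Z ∪ W) := by
    ext u; simp only [Finset.mem_union, hmemZ, hmemW, hmemA]; tauto
  have hSXcu : (S ∪ X)ᶜ = B := by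
    ext u; simp only [hmemB, Finset.mem_compl, Finset.mem_union]; tauto
  have hXcu : Xᶜ = A ∪ B := by
    ext u; simp only [Finset.mem_union, hmemA, hmemB, Finset.mem_compl]; tauto
  -- disjointness
  have dZA : Disjoint Z A := by
    rw [Finset.disjoint_left]; intro u h1 h2; exact ((hmemA u).mp h2).2 ((hmemZ u).mp h1).1
  have dWB : Disjoint W B := by
    rw [Finset.disjoint_left]; intro u h1 h2; exact ((hmemB u).mp h2).2 ((hmemW u).mp h1).1
  have dZWB : Disjoint Z (W ∪ B) := by
    rw [Finset.disjoint_left]; intro u h1 h2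
    rcases Finset.mem_union.mp h2 with h | h
    · exact ((hmemW u).mp h).2 ((hmemZ u).mp h1).2
    · exact ((hmemB u).mp h).2 ((hmemZ u).mp h1).1
  have dAZW : Disjoint A (Z ∪ W) := by
    rw [Finset.disjoint_left]; intro u h1 h2
    rcases Finset.mem_union.mp h2 with h | h
    · exact ((hmemA u).mp h1).2 ((hmemZ u).mp h).1
    · exact ((hmemA u).mp h1).2 ((hmemW u).mp h).1
  have dZW : Disjoint Z W := by
    rw [Finset.disjoint_left]; intro u h1 h2; exact ((hmemW u).mp h2).2 ((hmemZ u).mp h1).2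
  have dAB : Disjoint A B := by
    rw [Finset.disjoint_left]; intro u h1 h2; exact ((hmemB u).mp h2).1 ((hmemA u).mp h1).1
  -- abbreviations
  set gz : V → ℝ := fun u => ∑ v ∈ Z, w u v with hgz
  set gw : V → ℝ := fun u => ∑ v ∈ W, w u v with hgw
  set hz : V → ℝ := fun u => ∑ v ∈ Z, |w u v| with hhz
  set hw : V → ℝ := fun u => ∑ v ∈ W, |w u v| with hhw
  set cZW : ℝ := ∑ a ∈ Z, ∑ b ∈ W, w a b with hcZW
  set cAB : ℝ := ∑ a ∈ A, ∑ b ∈ B, w a b with hcAB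
  -- cut value expansions
  have ecS : cutVal w S = cZW + (∑ b ∈ B, gz b) + ((∑ a ∈ A, gw a) + cAB) := by
    rw [cutVal, hScu, hSu, Finset.sum_union dZA]
    simp only [Finset.sum_union dWB, Finset.sum_add_distrib]
    rw [flip_sum w hsymm Z B]
  have ec1 : cutVal w A = (∑ a ∈ A, gz a) + ((∑ a ∈ A, gw a) + cAB) := by
    rw [cutVal, hAcu]
    simp only [Finset.sum_union dZWB, Finset.sum_union dWB, Finset.sum_add_distrib]
    rfl
  have ec2 : cutVal w (S ∪ X) = cAB + ((∑ b ∈ B, gz b) + (∑ b ∈ B, gw b)) := by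
    rw [cutVal, hSXcu, hSXu, Finset.sum_union dAZW, Finset.sum_union dZW]
    rw [flip_sum w hsymm Z B, flip_sum w hsymm W B]
  -- penalty expansions
  have eP2 : (∑ a ∈ Z, ∑ b ∈ Xᶜ, |w a b|) = (∑ a ∈ A, hz a) + (∑ b ∈ B, hz b) := by
    rw [flip_sum_abs w hsymm Z Xᶜ, hXcu, Finset.sum_union dAB]
  have eP3 : (∑ a ∈ W, ∑ b ∈ Xᶜ, |w a b|) = (∑ a ∈ A, hw a) + (∑ b ∈ B, hw b) := by
    rw [flip_sum_abs w hsymm W Xᶜ, hXcu, Finset.sum_union dAB]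
  have eP1 : (∑ u ∈ Xᶜ, |gz u - gw u|) =
      (∑ a ∈ A, |gz a - gw a|) + (∑ b ∈ B, |gz b - gw b|) := by
    rw [hXcu, Finset.sum_union dAB]
  -- basic inequalities
  have iAz : ∑ a ∈ A, gz a ≤ ∑ a ∈ A, hz a := by
    simp only [hgz, hhz]
    exact Finset.sum_le_sum fun a _ => Finset.sum_le_sum fun v _ => le_abs_self _
  have iBz : -(∑ b ∈ B, hz b) ≤ ∑ b ∈ B, gz b := by
    have : ∀ b ∈ B, -hz b ≤ gz b := fun b _ => by
      rw [neg_le]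
      calc -gz b ≤ |gz b| := neg_le_abs _
        _ ≤ hz b := by simp only [hgz, hhz]; exact Finset.abs_sum_le_sum_abs _ _
    calc -(∑ b ∈ B, hz b) = ∑ b ∈ B, -hz b := by rw [Finset.sum_neg_distrib]
      _ ≤ ∑ b ∈ B, gz b := Finset.sum_le_sum this
  have iBw : ∑ b ∈ B, gw b ≤ ∑ b ∈ B, hw b := by
    simp only [hgw, hhw]
    exact Finset.sum_le_sum fun b _ => Finset.sum_le_sum fun v _ => le_abs_self _
  have iAw : -(∑ a ∈ A, hw a) ≤ ∑ a ∈ A, gw a := by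
    have : ∀ a ∈ A, -hw a ≤ gw a := fun a _ => by
      rw [neg_le]
      calc -gw a ≤ |gw a| := neg_le_abs _
        _ ≤ hw a := by simp only [hgw, hhw]; exact Finset.abs_sum_le_sum_abs _ _
    calc -(∑ a ∈ A, hw a) = ∑ a ∈ A, -hw a := by rw [Finset.sum_neg_distrib]
      _ ≤ ∑ a ∈ A, gw a := Finset.sum_le_sum this
  have iAg : ∑ a ∈ A, (gz a - gw a) ≤ ∑ a ∈ A, |gz a - gw a| :=
    Finset.sum_le_sum fun a _ => le_abs_self _
  have iBg : -(∑ b ∈ B, |gz b - gw b|) ≤ ∑ b ∈ B, (gz b - gw b) := by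
    calc -(∑ b ∈ B, |gz b - gw b|) = ∑ b ∈ B, -|gz b - gw b| := by
          rw [Finset.sum_neg_distrib]
      _ ≤ ∑ b ∈ B, (gz b - gw b) := Finset.sum_le_sum fun b _ => neg_abs_le _
  have sA : ∑ a ∈ A, (gz a - gw a) = (∑ a ∈ A, gz a) - (∑ a ∈ A, gw a) :=
    Finset.sum_sub_distrib _ _
  have sB : ∑ b ∈ B, (gz b - gw b) = (∑ b ∈ B, gz b) - (∑ b ∈ B, gw b) :=
    Finset.sum_sub_distrib _ _
  -- Z is an admissible set
  have hZmem : Z ∈ {Z : Finset V | Z ⊆ X ∧ Z ≠ ∅ ∧ Z ≠ X} :=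
    ⟨Finset.inter_subset_left, hSsep.1, hSsep.2⟩
  -- non-separating cuts
  have hA_nonsep : ¬ Separates A X := fun h =>
    h.1 (by rw [hAdef]; exact Finset.inter_sdiff_self X S)
  have hSX_nonsep : ¬ Separates (S ∪ X) X := fun h =>
    h.2 (Finset.inter_eq_left.mpr Finset.subset_union_right)
  have hfin2 : ((cutVal w '' {S : Finset V | ¬ Separates S X}) : Set ℝ).Finite :=
    (Set.toFinite _).image _
  have hn1 : ns ≤ cutVal w A := csInf_le hfin2.bddBelow ⟨A, hA_nonsep, rfl⟩
  have hn2 : ns ≤ cutVal w (S ∪ X) := csInf_le hfin2.bddBelow ⟨S ∪ X, hSX_nonsep, rfl⟩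
  -- main chain
  have hffin : (((fun Z : Finset V =>
        (∑ a ∈ Z, ∑ b ∈ X \ Z, w a b) -
          min (min ((1 / 2) * ∑ u ∈ Xᶜ, |(∑ v ∈ Z, w u v) - ∑ v ∈ X \ Z, w u v|)
                   (∑ a ∈ Z, ∑ b ∈ Xᶜ, |w a b|))
              (∑ a ∈ X \ Z, ∑ b ∈ Xᶜ, |w a b|)) ''
      {Z : Finset V | Z ⊆ X ∧ Z ≠ ∅ ∧ Z ≠ X}) : Set ℝ).Finite :=
    (Set.toFinite _).image _
  refine le_trans (csInf_le hffin.bddBelow ⟨Z, hZmem, rfl⟩) ?_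
  rw [nuIdx, ← hSval, ← hns]
  have hgzu : ∀ u, (∑ v ∈ Z, w u v) = gz u := fun u => rfl
  have hgwu : ∀ u, (∑ v ∈ W, w u v) = gw u := fun u => rfl
  simp only [← hWdef, hgzu, hgwu, ← hcZW]
  have key : cZW - (cutVal w S - ns) ≤
      min (min ((1 / 2) * ∑ u ∈ Xᶜ, |gz u - gw u|) (∑ a ∈ Z, ∑ b ∈ Xᶜ, |w a b|))
          (∑ a ∈ W, ∑ b ∈ Xᶜ, |w a b|) := by
    refine le_min (le_min ?_ ?_) ?_
    · linarith [ecS, ec1, ec2, hn1, hn2, eP1, iAg, iBg, sA, sB]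
    · linarith [ecS, ec1, hn1, eP2, iAz, iBz]
    · linarith [ecS, ec2, hn2, eP3, iAw, iBw]
  linarith [key]
end
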